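/- The Minkowski question-mark function is strictly monotone increasing on [0,1]: if x < y then ?(x) < ?(y). -/

import Mathlib

/-- The `k`-th partial quotient (continued fraction digit) `a_{k+1}` of `x`,
obtained from Mathlib's continued fraction algorithm; `0` if the expansion
has terminated. -/
noncomputable def cfDigit (x : ℝ) (k : ℕ) : ℕ :=
  (((GenContFract.of x).partDens.get? k).map fun r => (⌊r⌋).toNat).getD 0

/-- The Minkowski question-mark function, defined by
`?([a₀; a₁, a₂, …]) = a₀ + 2 ∑_{k≥1} (-1)^{k+1} / 2^{a₁+⋯+a_k}`,
where terms beyond the termination of a finite continued fraction are `0`. -/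
noncomputable def minkowski (x : ℝ) : ℝ :=
  (⌊x⌋ : ℝ) + ∑' k : ℕ,
    if ((GenContFract.of x).partDens.get? k).isSome then
      2 * (-1 : ℝ) ^ k / 2 ^ (∑ i ∈ Finset.range (k + 1), cfDigit x i)
    else 0

section MinkowskiAux
set_option autoImplicit false
open GenContFract Set in
lemma of_s_fract (w : ℝ) : (GenContFract.of (Int.fract w)).s = (GenContFract.of w).s := by
  rcases eq_or_ne (Int.fract w) 0 with h | h
  · obtain ⟨a, rfl⟩ : ∃ a : ℤ, w = (a : ℝ) := ⟨⌊w⌋, by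
      have h2 : Int.fract w = w - ⌊w⌋ := rfl
      rw [h2] at h; linarith [sub_eq_zero.mp h]⟩
    rw [Int.fract_intCast, show ((0:ℝ)) = ((0:ℤ):ℝ) by norm_num, of_s_of_int, of_s_of_int]
  · apply Stream'.Seq.ext
    intro n
    cases n with
    | zero =>
      have h' : Int.fract (Int.fract w) ≠ 0 := by rwa [Int.fract_fract]
      have e1 := of_s_head (v := Int.fract w) h'
      have e2 := of_s_head (v := w) h
      rw [Int.fract_fract] at e1
      simpa [Stream'.Seq.head] using e1.trans e2.symm
    | succ n => rw [of_s_succ, of_s_succ, Int.fract_fract]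

open GenContFract Set

lemma fract_self {x : ℝ} (hx : x ∈ Ioo (0:ℝ) 1) : Int.fract x = x :=
  Int.fract_eq_self.mpr ⟨hx.1.le, hx.2⟩

lemma of_s_shift {x : ℝ} (hx : x ∈ Ioo (0:ℝ) 1) (n : ℕ) :
    (GenContFract.of x).s.get? (n + 1) = (GenContFract.of (Int.fract x⁻¹)).s.get? n := by
  rw [of_s_succ, fract_self hx, of_s_fract]

lemma of_s_zero {x : ℝ} (hx : x ∈ Ioo (0:ℝ) 1) :
    (GenContFract.of x).s.get? 0 = some ⟨1, (⌊x⁻¹⌋ : ℝ)⟩ := by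
  have h : Int.fract x ≠ 0 := by rw [fract_self hx]; exact hx.1.ne'
  have := of_s_head (v := x) h
  rw [fract_self hx] at this
  simpa [Stream'.Seq.head] using this

lemma partDens_get? (x : ℝ) (k : ℕ) :
    (GenContFract.of x).partDens.get? k
      = ((GenContFract.of x).s.get? k).map GenContFract.Pair.b := by
  simp [GenContFract.partDens, Stream'.Seq.map_get?]

lemma cfDigit_shift {x : ℝ} (hx : x ∈ Ioo (0:ℝ) 1) (n : ℕ) :
    cfDigit x (n + 1) = cfDigit (Int.fract x⁻¹) n := by
  unfold cfDigit
  rw [partDens_get?, partDens_get?, of_s_shift hx]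

lemma isSome_shift {x : ℝ} (hx : x ∈ Ioo (0:ℝ) 1) (n : ℕ) :
    ((GenContFract.of x).partDens.get? (n+1)).isSome
      = ((GenContFract.of (Int.fract x⁻¹)).partDens.get? n).isSome := by
  rw [partDens_get?, partDens_get?, of_s_shift hx]

lemma one_lt_inv_mem {x : ℝ} (hx : x ∈ Ioo (0:ℝ) 1) : 1 < x⁻¹ :=
  (one_lt_inv₀ hx.1).mpr hx.2

lemma floor_inv_pos {x : ℝ} (hx : x ∈ Ioo (0:ℝ) 1) : 1 ≤ ⌊x⁻¹⌋ := by
  have := one_lt_inv_mem hx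
  exact Int.le_floor.mpr (by exact_mod_cast this.le)

lemma cfDigit_zero_eq {x : ℝ} (hx : x ∈ Ioo (0:ℝ) 1) : cfDigit x 0 = (⌊x⁻¹⌋).toNat := by
  unfold cfDigit
  rw [partDens_get?, of_s_zero hx]
  simp [Int.floor_intCast]

lemma cfDigit_zero_pos {x : ℝ} (hx : x ∈ Ioo (0:ℝ) 1) : 1 ≤ cfDigit x 0 := by
  rw [cfDigit_zero_eq hx]
  have := floor_inv_pos hx
  omega

lemma of_s_int_none (x : ℝ) (hx : x = 0 ∨ x = 1) (k : ℕ) :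
    (GenContFract.of x).partDens.get? k = none := by
  rw [partDens_get?]
  rcases hx with rfl | rfl
  · rw [show ((0:ℝ)) = ((0:ℤ):ℝ) by norm_num, of_s_of_int]; simp
  · rw [show ((1:ℝ)) = ((1:ℤ):ℝ) by norm_num, of_s_of_int]; simp

lemma cfDigit_int (x : ℝ) (hx : x = 0 ∨ x = 1) (k : ℕ) : cfDigit x k = 0 := by
  unfold cfDigit; rw [of_s_int_none x hx]; rfl

lemma cfDigit_eq_b {x : ℝ} {k : ℕ} {b : ℝ}
    (h : (GenContFract.of x).partDens.get? k = some b) :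
    ((cfDigit x k : ℝ)) = b ∧ 1 ≤ cfDigit x k := by
  have h1 : 1 ≤ b := of_one_le_get?_partDen h
  obtain ⟨gp, hgp, hb⟩ : ∃ gp, (GenContFract.of x).s.get? k = some gp ∧ gp.b = b := by
    rw [partDens_get?] at h
    rcases hgb : (GenContFract.of x).s.get? k with _ | gp
    · rw [hgb] at h; simp at h
    · rw [hgb] at h; exact ⟨gp, rfl, by simpa using h⟩
  obtain ⟨-, z, hz⟩ := of_partNum_eq_one_and_exists_int_partDen_eq hgp
  rw [hb] at hz
  subst hz
  have hz1 : 1 ≤ z := by exact_mod_cast h1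
  constructor
  · unfold cfDigit; rw [h]; simp
    have : (z.toNat : ℤ) = z := Int.toNat_of_nonneg (by omega)
    exact_mod_cast this
  · unfold cfDigit; rw [h]; simp; omega

lemma cfDigit_pos_of_isSome {x : ℝ} {k : ℕ}
    (h : ((GenContFract.of x).partDens.get? k).isSome) : 1 ≤ cfDigit x k := by
  rcases Option.isSome_iff_exists.mp h with ⟨b, hb⟩
  exact (cfDigit_eq_b hb).2

lemma isSome_mono {x : ℝ} {i k : ℕ} (hik : i ≤ k)
    (h : ((GenContFract.of x).partDens.get? k).isSome) :
    ((GenContFract.of x).partDens.get? i).isSome := by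
  rw [partDens_get?] at h ⊢
  rcases Option.isSome_iff_exists.mp h with ⟨b, hb⟩
  rcases hgb : (GenContFract.of x).s.get? k with _ | gp
  · rw [hgb] at hb; simp at hb
  · obtain ⟨y, hy⟩ := (GenContFract.of x).s.ge_stable hik hgb
    rw [hy]; rfl

noncomputable def mterm (x : ℝ) (k : ℕ) : ℝ :=
  if ((GenContFract.of x).partDens.get? k).isSome then
    2 * (-1 : ℝ) ^ k / 2 ^ (∑ i ∈ Finset.range (k + 1), cfDigit x i)
  else 0

lemma sum_digits_ge {x : ℝ} {k : ℕ} (h : ((GenContFract.of x).partDens.get? k).isSome) :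
    k + 1 ≤ ∑ i ∈ Finset.range (k + 1), cfDigit x i := by
  calc k + 1 = ∑ _i ∈ Finset.range (k + 1), 1 := by simp
  _ ≤ ∑ i ∈ Finset.range (k + 1), cfDigit x i := by
      apply Finset.sum_le_sum
      intro i hi
      exact cfDigit_pos_of_isSome (isSome_mono (by simp at hi; omega) h)

lemma mterm_abs_le (x : ℝ) (k : ℕ) : ‖mterm x k‖ ≤ (1/2 : ℝ) ^ k := by
  unfold mterm
  split
  · rename_i h
    have hS := sum_digits_ge h
    rw [Real.norm_eq_abs, abs_div, abs_mul]
    simp only [abs_pow, abs_neg, abs_one, one_pow, mul_one, abs_two]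
    rw [div_le_iff₀ (by positivity)]
    have h2 : (2:ℝ) ^ (k+1) ≤ 2 ^ (∑ i ∈ Finset.range (k + 1), cfDigit x i) :=
      pow_le_pow_right₀ one_le_two hS
    calc (2:ℝ) = (1/2)^k * 2^(k+1) := by
          rw [one_div, inv_pow, pow_succ]; field_simp
    _ ≤ (1/2)^k * 2 ^ (∑ i ∈ Finset.range (k + 1), cfDigit x i) := by
          apply mul_le_mul_of_nonneg_left h2 (by positivity)
  · simp only [norm_zero]; positivity

lemma summable_mterm (x : ℝ) : Summable (mterm x) :=
  Summable.of_norm_bounded (summable_geometric_of_lt_one (by norm_num) (by norm_num)) (mterm_abs_le x)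

lemma tsum_pair_nonneg {f : ℕ → ℝ} (hf : Summable f)
    (h : ∀ m, 0 ≤ f (2*m) + f (2*m+1)) : 0 ≤ ∑' k, f k := by
  have h2 : Summable (fun m => f (2*m)) := hf.comp_injective (fun a b hab => by omega)
  have h3 : Summable (fun m => f (2*m+1)) := hf.comp_injective (fun a b hab => by omega)
  rw [← tsum_even_add_odd h2 h3, ← Summable.tsum_add h2 h3]
  exact tsum_nonneg h

lemma mterm_of_none {x : ℝ} {k : ℕ} (h : ¬ ((GenContFract.of x).partDens.get? k).isSome) :
    mterm x k = 0 := by unfold mterm; rw [if_neg h]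

lemma mterm_even_eq {x : ℝ} {k : ℕ} (hk : Even k)
    (h : ((GenContFract.of x).partDens.get? k).isSome) :
    mterm x k = 2 / 2 ^ (∑ i ∈ Finset.range (k + 1), cfDigit x i) := by
  unfold mterm; rw [if_pos h, hk.neg_one_pow, mul_one]

lemma mterm_odd_eq {x : ℝ} {k : ℕ} (hk : Odd k)
    (h : ((GenContFract.of x).partDens.get? k).isSome) :
    mterm x k = -(2 / 2 ^ (∑ i ∈ Finset.range (k + 1), cfDigit x i)) := by
  unfold mterm; rw [if_pos h, hk.neg_one_pow]; ring

lemma mterm_even_nonneg (x : ℝ) {k : ℕ} (hk : Even k) : 0 ≤ mterm x k := by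
  by_cases h : ((GenContFract.of x).partDens.get? k).isSome
  · rw [mterm_even_eq hk h]; positivity
  · rw [mterm_of_none h]

lemma mterm_odd_nonpos (x : ℝ) {k : ℕ} (hk : Odd k) : mterm x k ≤ 0 := by
  by_cases h : ((GenContFract.of x).partDens.get? k).isSome
  · rw [mterm_odd_eq hk h]
    simp only [neg_nonpos]
    positivity
  · rw [mterm_of_none h]

lemma mterm_succ_abs_le (x : ℝ) (k : ℕ)
    (h : ((GenContFract.of x).partDens.get? (k+1)).isSome) :
    (2:ℝ) / 2 ^ (∑ i ∈ Finset.range (k + 1 + 1), cfDigit x i)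
      ≤ ((2:ℝ) / 2 ^ (∑ i ∈ Finset.range (k + 1), cfDigit x i)) / 2 := by
  have hd : 1 ≤ cfDigit x (k+1) := cfDigit_pos_of_isSome h
  have hsum := Finset.sum_range_succ (cfDigit x) (k+1)
  have hS : (∑ i ∈ Finset.range (k + 1), cfDigit x i) + 1 ≤ ∑ i ∈ Finset.range (k + 1 + 1), cfDigit x i := by
    omega
  have h2 : (2:ℝ) ^ ((∑ i ∈ Finset.range (k + 1), cfDigit x i) + 1)
      ≤ 2 ^ (∑ i ∈ Finset.range (k + 1 + 1), cfDigit x i) := pow_le_pow_right₀ one_le_two hS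
  have e : (2 / 2 ^ (∑ i ∈ Finset.range (k + 1), cfDigit x i) : ℝ) / 2
      = 2 / (2 ^ (∑ i ∈ Finset.range (k + 1), cfDigit x i) * 2) := by
    rw [div_div]
  rw [e]
  apply div_le_div_of_nonneg_left (by norm_num) (by positivity)
  rw [← pow_succ]
  exact h2

lemma mterm_pair_nonneg (x : ℝ) (m : ℕ) : 0 ≤ mterm x (2*m) + mterm x (2*m+1) := by
  by_cases h : ((GenContFract.of x).partDens.get? (2*m+1)).isSome
  · have h0 : ((GenContFract.of x).partDens.get? (2*m)).isSome := isSome_mono (by omega) h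
    rw [mterm_even_eq ⟨m, by ring⟩ h0, mterm_odd_eq ⟨m, rfl⟩ h]
    have h1 := mterm_succ_abs_le x (2*m) h
    have hp : (0:ℝ) < 2 / 2 ^ (∑ i ∈ Finset.range (2*m + 1), cfDigit x i) := by positivity
    linarith
  · rw [mterm_of_none h]
    simpa using mterm_even_nonneg x (k := 2*m) ⟨m, by ring⟩

lemma mterm_pair_nonpos (x : ℝ) (m : ℕ) : mterm x (2*m+1) + mterm x (2*m+2) ≤ 0 := by
  by_cases h : ((GenContFract.of x).partDens.get? (2*m+2)).isSome
  · have h0 : ((GenContFract.of x).partDens.get? (2*m+1)).isSome := isSome_mono (by omega) h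
    rw [mterm_odd_eq ⟨m, rfl⟩ h0, mterm_even_eq ⟨m+1, by ring⟩ h]
    have h1 := mterm_succ_abs_le x (2*m+1) (by rw [show 2*m+1+1 = 2*m+2 from rfl]; exact h)
    have e : 2*m+1+1+1 = 2*m+2+1 := by omega
    rw [e] at h1
    have e2 : 2*m+1+1 = 2*m+2 := by omega
    rw [e2] at h1
    have hp : (0:ℝ) < 2 / 2 ^ (∑ i ∈ Finset.range (2*m + 2), cfDigit x i) := by positivity
    linarith
  · rw [mterm_of_none h]
    simpa using mterm_odd_nonpos x (k := 2*m+1) ⟨m, rfl⟩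
lemma tsum_mterm_nonneg (x : ℝ) : 0 ≤ ∑' k, mterm x k :=
  tsum_pair_nonneg (summable_mterm x) (mterm_pair_nonneg x)

lemma tsum_mterm_le_head (x : ℝ) : ∑' k, mterm x k ≤ mterm x 0 := by
  rw [Summable.tsum_eq_zero_add (summable_mterm x)]
  have hs : Summable (fun k => mterm x (k+1)) :=
    (summable_mterm x).comp_injective (fun a b hab => by omega)
  have h1 : 0 ≤ ∑' k, -mterm x (k+1) := by
    apply tsum_pair_nonneg hs.neg
    intro m
    have := mterm_pair_nonpos x m
    have e : 2*m+1+1 = 2*m+2 := by ring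
    simp only [e]
    linarith
  rw [tsum_neg] at h1
  linarith

lemma mterm_head_le_one (x : ℝ) : mterm x 0 ≤ 1 := by
  by_cases h : ((GenContFract.of x).partDens.get? 0).isSome
  · rw [mterm_even_eq Even.zero h]
    have hd : 1 ≤ cfDigit x 0 := cfDigit_pos_of_isSome h
    have : (2:ℝ)^1 ≤ 2 ^ (∑ i ∈ Finset.range 1, cfDigit x i) := by
      apply pow_le_pow_right₀ one_le_two
      simpa using hd
    rw [div_le_one (by positivity)]
    simpa using this
  · rw [mterm_of_none h]; norm_num

lemma minkowski_eq (x : ℝ) : minkowski x = (⌊x⌋ : ℝ) + ∑' k, mterm x k := rfl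

lemma minkowski_int (x : ℝ) (hx : x = 0 ∨ x = 1) : minkowski x = x := by
  have h : ∀ k, mterm x k = 0 := by
    intro k
    apply mterm_of_none
    rw [of_s_int_none x hx]
    simp
  rw [minkowski_eq]
  rw [tsum_congr h, tsum_zero]
  rcases hx with rfl | rfl <;> norm_num

lemma floor_eq_zero {x : ℝ} (hx : x ∈ Ico (0:ℝ) 1) : (⌊x⌋ : ℝ) = 0 := by
  have : ⌊x⌋ = 0 := Int.floor_eq_zero_iff.mpr hx
  rw [this]; norm_num

lemma minkowski_eq' {x : ℝ} (hx : x ∈ Ico (0:ℝ) 1) : minkowski x = ∑' k, mterm x k := by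
  rw [minkowski_eq, floor_eq_zero hx, zero_add]

lemma minkowski_nonneg {x : ℝ} (hx : x ∈ Ico (0:ℝ) 1) : 0 ≤ minkowski x := by
  rw [minkowski_eq' hx]; exact tsum_mterm_nonneg x

lemma minkowski_le_one {x : ℝ} (hx : x ∈ Ico (0:ℝ) 1) : minkowski x ≤ 1 := by
  rw [minkowski_eq' hx]
  exact (tsum_mterm_le_head x).trans (mterm_head_le_one x)

lemma isSome_zero {x : ℝ} (hx : x ∈ Ioo (0:ℝ) 1) :
    ((GenContFract.of x).partDens.get? 0).isSome := by
  rw [partDens_get?, of_s_zero hx]; rfl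

lemma mterm_zero_eq {x : ℝ} (hx : x ∈ Ioo (0:ℝ) 1) :
    mterm x 0 = 2 / 2 ^ (cfDigit x 0) := by
  rw [mterm_even_eq Even.zero (isSome_zero hx)]
  rw [Finset.sum_range_one]

lemma mterm_succ_eq {x : ℝ} (hx : x ∈ Ioo (0:ℝ) 1) (k : ℕ) :
    mterm x (k+1) = -(1 / 2 ^ (cfDigit x 0)) * mterm (Int.fract x⁻¹) k := by
  by_cases h : ((GenContFract.of (Int.fract x⁻¹)).partDens.get? k).isSome
  · have h' : ((GenContFract.of x).partDens.get? (k+1)).isSome := by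
      rw [isSome_shift hx]; exact h
    unfold mterm
    rw [if_pos h', if_pos h]
    have hsum : ∑ i ∈ Finset.range (k+1+1), cfDigit x i
        = (∑ i ∈ Finset.range (k+1), cfDigit (Int.fract x⁻¹) i) + cfDigit x 0 := by
      rw [Finset.sum_range_succ']
      congr 1
      apply Finset.sum_congr rfl
      intro i _
      exact cfDigit_shift hx i
    rw [hsum, pow_add, pow_succ]
    have hp1 : (0:ℝ) < 2 ^ (∑ i ∈ Finset.range (k+1), cfDigit (Int.fract x⁻¹) i) := by positivity
    have hp2 : (0:ℝ) < 2 ^ (cfDigit x 0) := by positivity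
    field_simp
    ring
  · have h' : ¬ ((GenContFract.of x).partDens.get? (k+1)).isSome := by
      rw [isSome_shift hx]; exact h
    rw [mterm_of_none h', mterm_of_none h, mul_zero]

lemma minkowski_rec {x : ℝ} (hx : x ∈ Ioo (0:ℝ) 1) :
    minkowski x = (2 - minkowski (Int.fract x⁻¹)) / 2 ^ (cfDigit x 0) := by
  have hy : Int.fract x⁻¹ ∈ Ico (0:ℝ) 1 := ⟨Int.fract_nonneg _, Int.fract_lt_one _⟩
  rw [minkowski_eq' ⟨hx.1.le, hx.2⟩, Summable.tsum_eq_zero_add (summable_mterm x)]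
  have h2 : (∑' k, mterm x (k+1)) = -(1 / 2 ^ (cfDigit x 0)) * ∑' k, mterm (Int.fract x⁻¹) k := by
    rw [← tsum_mul_left]
    exact tsum_congr (mterm_succ_eq hx)
  rw [h2, mterm_zero_eq hx, ← minkowski_eq' hy]
  have hp : (0:ℝ) < 2 ^ (cfDigit x 0) := by positivity
  field_simp
  ring

lemma minkowski_pos {x : ℝ} (hx : x ∈ Ioo (0:ℝ) 1) : 0 < minkowski x := by
  rw [minkowski_rec hx]
  have hy : Int.fract x⁻¹ ∈ Ico (0:ℝ) 1 := ⟨Int.fract_nonneg _, Int.fract_lt_one _⟩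
  have h1 : minkowski (Int.fract x⁻¹) ≤ 1 := minkowski_le_one hy
  have hp : (0:ℝ) < 2 ^ (cfDigit x 0) := by positivity
  apply div_pos (by linarith) hp

lemma minkowski_lt_one {x : ℝ} (hx : x ∈ Ioo (0:ℝ) 1) : minkowski x < 1 := by
  rw [minkowski_rec hx]
  have hy : Int.fract x⁻¹ ∈ Ico (0:ℝ) 1 := ⟨Int.fract_nonneg _, Int.fract_lt_one _⟩
  have h0 : 0 ≤ minkowski (Int.fract x⁻¹) := minkowski_nonneg hy
  rcases eq_or_lt_of_le (cfDigit_zero_pos hx) with ha | ha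
  · -- cfDigit x 0 = 1
    have hfl : ⌊x⁻¹⌋ = 1 := by
      have h1 := floor_inv_pos hx
      have h2 := cfDigit_zero_eq hx
      omega
    have hyp : 0 < Int.fract x⁻¹ := by
      have hr : Int.fract x⁻¹ = x⁻¹ - ⌊x⁻¹⌋ := rfl
      rw [hr, hfl]
      have := one_lt_inv_mem hx
      push_cast
      linarith
    have hpos : 0 < minkowski (Int.fract x⁻¹) := minkowski_pos ⟨hyp, Int.fract_lt_one _⟩
    rw [← ha]
    norm_num
    linarith
  · -- 2 ≤ cfDigit x 0
    have h4 : (4:ℝ) ≤ 2 ^ (cfDigit x 0) := by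
      calc (4:ℝ) = 2^2 := by norm_num
      _ ≤ 2 ^ (cfDigit x 0) := pow_le_pow_right₀ one_le_two ha
    rw [div_lt_one (by positivity)]
    linarith

lemma minkowski_lt_one' {x : ℝ} (hx : x ∈ Ico (0:ℝ) 1) : minkowski x < 1 := by
  rcases eq_or_lt_of_le hx.1 with h | h
  · rw [minkowski_int x (Or.inl h.symm), ← h]; norm_num
  · exact minkowski_lt_one ⟨h, hx.2⟩

lemma mem_Ioo_of_digit {x : ℝ} (hx : x ∈ Icc (0:ℝ) 1) (h : cfDigit x 0 ≠ 0) :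
    x ∈ Ioo (0:ℝ) 1 := by
  rcases eq_or_lt_of_le hx.1 with h0 | h0
  · exact absurd (cfDigit_int x (Or.inl h0.symm) 0) h
  rcases eq_or_lt_of_le hx.2 with h1 | h1
  · exact absurd (cfDigit_int x (Or.inr h1) 0) h
  exact ⟨h0, h1⟩

lemma eq01_of_digit {x : ℝ} (hx : x ∈ Icc (0:ℝ) 1) (h : cfDigit x 0 = 0) :
    x = 0 ∨ x = 1 := by
  by_contra hc
  push_neg at hc
  have hI : x ∈ Ioo (0:ℝ) 1 := ⟨lt_of_le_of_ne hx.1 (Ne.symm hc.1), lt_of_le_of_ne hx.2 hc.2⟩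
  have := cfDigit_zero_pos hI
  omega

lemma key_base {x y : ℝ} (hx : x ∈ Icc (0:ℝ) 1) (hy : y ∈ Icc (0:ℝ) 1) (hxy : x < y)
    (hd : cfDigit x 0 ≠ cfDigit y 0) : minkowski x < minkowski y := by
  have hx' : x = 0 ∨ x ∈ Ioo (0:ℝ) 1 := by
    rcases eq_or_lt_of_le hx.1 with h | h
    · exact Or.inl h.symm
    · exact Or.inr ⟨h, lt_of_lt_of_le hxy hy.2⟩
  have hy' : y = 1 ∨ y ∈ Ioo (0:ℝ) 1 := by
    rcases eq_or_lt_of_le hy.2 with h | h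
    · exact Or.inl h
    · exact Or.inr ⟨lt_of_le_of_lt hx.1 hxy, h⟩
  rcases hx' with rfl | hxI
  · rw [minkowski_int 0 (Or.inl rfl)]
    rcases hy' with rfl | hyI
    · rw [minkowski_int 1 (Or.inr rfl)]; norm_num
    · exact minkowski_pos hyI
  rcases hy' with rfl | hyI
  · rw [minkowski_int 1 (Or.inr rfl)]
    exact minkowski_lt_one hxI
  · -- both in Ioo
    have hinv : y⁻¹ < x⁻¹ := by
      apply inv_strictAnti₀ hxI.1 hxy
    have hfl : ⌊y⁻¹⌋ ≤ ⌊x⁻¹⌋ := Int.floor_le_floor hinv.le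
    have hax : cfDigit y 0 ≤ cfDigit x 0 := by
      rw [cfDigit_zero_eq hxI, cfDigit_zero_eq hyI]
      omega
    have haxy : cfDigit y 0 + 1 ≤ cfDigit x 0 := by omega
    have hTx : Int.fract x⁻¹ ∈ Ico (0:ℝ) 1 := ⟨Int.fract_nonneg _, Int.fract_lt_one _⟩
    have hTy : Int.fract y⁻¹ ∈ Ico (0:ℝ) 1 := ⟨Int.fract_nonneg _, Int.fract_lt_one _⟩
    have h1 : minkowski x ≤ 2 / 2 ^ (cfDigit x 0) := by
      rw [minkowski_rec hxI]
      apply div_le_div_of_nonneg_right ?_ (by positivity)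
      · have := minkowski_nonneg hTx; linarith
    have h2 : (2:ℝ) / 2 ^ (cfDigit x 0) ≤ 1 / 2 ^ (cfDigit y 0) := by
      have : (2:ℝ) ^ (cfDigit y 0 + 1) ≤ 2 ^ (cfDigit x 0) :=
        pow_le_pow_right₀ one_le_two haxy
      rw [div_le_div_iff₀ (by positivity) (by positivity)]
      rw [pow_succ] at this
      nlinarith [pow_pos (show (0:ℝ) < 2 by norm_num) (cfDigit y 0)]
    have h3 : (1:ℝ) / 2 ^ (cfDigit y 0) < minkowski y := by
      rw [minkowski_rec hyI]
      have hlt : minkowski (Int.fract y⁻¹) < 1 := minkowski_lt_one' hTy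
      apply div_lt_div_of_pos_right (by linarith) (by positivity)
    linarith

lemma key_ind (k : ℕ) : ∀ {x y : ℝ}, x ∈ Icc (0:ℝ) 1 → y ∈ Icc (0:ℝ) 1 → x < y →
    cfDigit x k ≠ cfDigit y k → minkowski x < minkowski y := by
  induction k with
  | zero => exact fun hx hy hxy hd => key_base hx hy hxy hd
  | succ k ih =>
    intro x y hx hy hxy hd
    by_cases h0 : cfDigit x 0 = cfDigit y 0
    · by_cases hz : cfDigit x 0 = 0
      · have hx01 := eq01_of_digit hx hz
        have hy01 := eq01_of_digit hy (h0 ▸ hz)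
        exfalso
        exact hd ((cfDigit_int x hx01 (k+1)).trans (cfDigit_int y hy01 (k+1)).symm)
      · have hxI : x ∈ Ioo (0:ℝ) 1 := mem_Ioo_of_digit hx hz
        have hyI : y ∈ Ioo (0:ℝ) 1 := mem_Ioo_of_digit hy (h0 ▸ hz)
        have hfl : ⌊x⁻¹⌋ = ⌊y⁻¹⌋ := by
          have hx1 := floor_inv_pos hxI
          have hy1 := floor_inv_pos hyI
          have e1 := cfDigit_zero_eq hxI
          have e2 := cfDigit_zero_eq hyI
          omega
        have hinv : y⁻¹ < x⁻¹ := inv_strictAnti₀ hxI.1 hxy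
        have hTlt : Int.fract y⁻¹ < Int.fract x⁻¹ := by
          have h1 : Int.fract x⁻¹ = x⁻¹ - ⌊x⁻¹⌋ := rfl
          have h2 : Int.fract y⁻¹ = y⁻¹ - ⌊y⁻¹⌋ := rfl
          rw [h1, h2, hfl]
          linarith
        have hTx : Int.fract x⁻¹ ∈ Icc (0:ℝ) 1 :=
          ⟨Int.fract_nonneg _, (Int.fract_lt_one _).le⟩
        have hTy : Int.fract y⁻¹ ∈ Icc (0:ℝ) 1 :=
          ⟨Int.fract_nonneg _, (Int.fract_lt_one _).le⟩
        have hdig : cfDigit (Int.fract y⁻¹) k ≠ cfDigit (Int.fract x⁻¹) k := by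
          rw [← cfDigit_shift hxI, ← cfDigit_shift hyI]
          exact fun hc => hd (hc.symm)
        have hlt := ih hTy hTx hTlt hdig
        rw [minkowski_rec hxI, minkowski_rec hyI, ← h0]
        apply div_lt_div_of_pos_right (by linarith) (by positivity)
    · exact key_base hx hy hxy h0

lemma eq_of_digits {x y : ℝ} (hx : x ∈ Ioo (0:ℝ) 1) (hy : y ∈ Ioo (0:ℝ) 1)
    (h : ∀ k, cfDigit x k = cfDigit y k) : x = y := by
  have hs : (GenContFract.of x).s = (GenContFract.of y).s := by
    apply Stream'.Seq.ext
    intro n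
    rcases h1 : (GenContFract.of x).s.get? n with _ | gp
    · rcases h2 : (GenContFract.of y).s.get? n with _ | gq
      · rfl
      · exfalso
        have hx0 : cfDigit x n = 0 := by
          unfold cfDigit; rw [partDens_get?, h1]; rfl
        have hy1 : 1 ≤ cfDigit y n :=
          (cfDigit_eq_b (show (GenContFract.of y).partDens.get? n = some gq.b by
            rw [partDens_get?, h2]; rfl)).2
        rw [h n] at hx0
        omega
    · rcases h2 : (GenContFract.of y).s.get? n with _ | gq
      · exfalso
        have hy0 : cfDigit y n = 0 := by
          unfold cfDigit; rw [partDens_get?, h2]; rfl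
        have hx1 : 1 ≤ cfDigit x n :=
          (cfDigit_eq_b (show (GenContFract.of x).partDens.get? n = some gp.b by
            rw [partDens_get?, h1]; rfl)).2
        rw [h n] at hx1
        omega
      · have ha1 : gp.a = 1 :=
          (of_partNum_eq_one_and_exists_int_partDen_eq h1).1
        have ha2 : gq.a = 1 :=
          (of_partNum_eq_one_and_exists_int_partDen_eq h2).1
        have hb1 : ((cfDigit x n : ℝ)) = gp.b :=
          (cfDigit_eq_b (show (GenContFract.of x).partDens.get? n = some gp.b by
            rw [partDens_get?, h1]; rfl)).1
        have hb2 : ((cfDigit y n : ℝ)) = gq.b :=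
          (cfDigit_eq_b (show (GenContFract.of y).partDens.get? n = some gq.b by
            rw [partDens_get?, h2]; rfl)).1
        have hb : gp.b = gq.b := by rw [← hb1, ← hb2, h n]
        have : gp = gq := by
          cases gp; cases gq
          simp only at ha1 ha2 hb
          simp [ha1, ha2, hb]
        rw [this]
  have hof : GenContFract.of x = GenContFract.of y := by
    apply GenContFract.ext ?_ hs
    rw [of_h_eq_floor, of_h_eq_floor,
      Int.floor_eq_zero_iff.mpr ⟨hx.1.le, hx.2⟩, Int.floor_eq_zero_iff.mpr ⟨hy.1.le, hy.2⟩]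
  have t1 := GenContFract.of_convergence x
  have t2 := GenContFract.of_convergence y
  rw [hof] at t1
  exact tendsto_nhds_unique t1 t2

/-- The Minkowski question-mark function is strictly monotone increasing on `[0,1]`. -/
theorem minkowski_strictMonoOn : StrictMonoOn minkowski (Set.Icc (0 : ℝ) 1) := by
  intro x hx y hy hxy
  by_cases h : ∀ k, cfDigit x k = cfDigit y k
  · by_cases hz : cfDigit x 0 = 0
    · have hx01 := eq01_of_digit hx hz
      have hy01 := eq01_of_digit hy (h 0 ▸ hz)
      have hx0 : x = 0 := by
        rcases hx01 with rfl | rfl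
        · rfl
        · rcases hy01 with rfl | rfl <;> linarith
      have hy1' : y = 1 := by
        subst hx0
        rcases hy01 with rfl | rfl
        · exact absurd hxy (lt_irrefl 0)
        · rfl
      subst hx0; subst hy1'
      rw [minkowski_int 0 (Or.inl rfl), minkowski_int 1 (Or.inr rfl)]
      norm_num
    · have hxI : x ∈ Ioo (0:ℝ) 1 := mem_Ioo_of_digit hx hz
      have hyI : y ∈ Ioo (0:ℝ) 1 := mem_Ioo_of_digit hy (h 0 ▸ hz)
      exact absurd (eq_of_digits hxI hyI h) hxy.ne
  · push_neg at h
    obtain ⟨k, hk⟩ := h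
    exact key_ind k hx hy hxy hk

end MinkowskiAux
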